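/- The derivative of G_λ(r) with respect to the smoothing parameter λ is uniformly bounded: |∂G_λ(r)/∂λ| ≤ log D + D·e^{−1} for all λ > 0 and all r ∈ ℝ^D. Consequently, λ ↦ G_λ(r) is Lipschitz on (0,∞) with constant log D + D/e, uniformly in r. -/

import Mathlib

open Real Finset

noncomputable def G (D : ℕ) (lam : ℝ) (r : Fin D → ℝ) : ℝ :=
  lam * Real.log (∑ d, Real.exp (r d / lam))

lemma mul_exp_lb {t : ℝ} (ht : t ≤ 0) : -Real.exp (-1) ≤ Real.exp t * t := by
  have h1 : -t ≤ Real.exp (-t - 1) := by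
    have := Real.add_one_le_exp (-t - 1)
    linarith
  have h2 : Real.exp (-t - 1) * Real.exp t = Real.exp (-1) := by
    rw [← Real.exp_add]; ring_nf
  have h3 := mul_le_mul_of_nonneg_right h1 (Real.exp_pos t).le
  rw [h2] at h3
  nlinarith [Real.exp_pos t]

lemma keyA (D : ℕ) (hD : 0 < D) (x : Fin D → ℝ) :
    |Real.log (∑ d, Real.exp (x d)) -
      (∑ d, Real.exp (x d) * x d) / (∑ d, Real.exp (x d))| ≤
      Real.log D + D * Real.exp (-1) := by
  haveI : Nonempty (Fin D) := Fin.pos_iff_nonempty.mp hD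
  obtain ⟨d₀, _, hd₀⟩ := Finset.exists_max_image Finset.univ x univ_nonempty
  set M := x d₀ with hM
  set y : Fin D → ℝ := fun d => x d - M with hy
  have hy0 : ∀ d, y d ≤ 0 := fun d => sub_nonpos.mpr (hd₀ d (mem_univ d))
  set S := ∑ d, Real.exp (y d) with hS
  set T := ∑ d, Real.exp (y d) * y d with hT
  have hSpos : 0 < S := Finset.sum_pos (fun d _ => Real.exp_pos _) univ_nonempty
  have hS1 : 1 ≤ S := by
    have : Real.exp (y d₀) ≤ S :=
      Finset.single_le_sum (fun d _ => (Real.exp_pos _).le) (mem_univ d₀)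
    have hy0' : y d₀ = 0 := by simp [hy, hM]
    rw [hy0', Real.exp_zero] at this
    exact this
  have hSD : S ≤ D := by
    calc S ≤ ∑ _d : Fin D, (1 : ℝ) :=
          Finset.sum_le_sum (fun d _ => Real.exp_le_one_iff.mpr (hy0 d))
      _ = D := by simp
  have hT0 : T ≤ 0 :=
    Finset.sum_nonpos (fun d _ => mul_nonpos_of_nonneg_of_nonpos (Real.exp_pos _).le (hy0 d))
  have hTlb : -((D : ℝ) * Real.exp (-1)) ≤ T := by
    calc -((D : ℝ) * Real.exp (-1)) = ∑ _d : Fin D, (-Real.exp (-1)) := by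
          simp [mul_comm]
      _ ≤ T := Finset.sum_le_sum (fun d _ => mul_exp_lb (hy0 d))
  -- rewrite the expression
  have hex : ∀ d, Real.exp (x d) = Real.exp M * Real.exp (y d) := by
    intro d; rw [← Real.exp_add]; congr 1; simp [hy]
  have hsum1 : (∑ d, Real.exp (x d)) = Real.exp M * S := by
    rw [hS, Finset.mul_sum]; exact Finset.sum_congr rfl (fun d _ => hex d)
  have hsum2 : (∑ d, Real.exp (x d) * x d) = Real.exp M * (T + M * S) := by
    rw [hT, hS, Finset.mul_sum, mul_add, Finset.mul_sum, Finset.mul_sum, ← Finset.sum_add_distrib]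
    refine Finset.sum_congr rfl (fun d _ => ?_)
    rw [hex d]
    have : x d = y d + M := by simp [hy]
    rw [this]; ring
  have hval : Real.log (∑ d, Real.exp (x d)) -
      (∑ d, Real.exp (x d) * x d) / (∑ d, Real.exp (x d)) = Real.log S - T / S := by
    rw [hsum1, hsum2, Real.log_mul (Real.exp_ne_zero M) hSpos.ne', Real.log_exp,
      mul_div_mul_left _ _ (Real.exp_ne_zero M)]
    field_simp
    ring
  rw [hval]
  have hlogS0 : 0 ≤ Real.log S := Real.log_nonneg hS1
  have hlogSD : Real.log S ≤ Real.log D := Real.log_le_log hSpos hSD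
  have hTS0 : 0 ≤ -T / S := div_nonneg (neg_nonneg.mpr hT0) hSpos.le
  have hTS1 : -T / S ≤ -T := div_le_self (neg_nonneg.mpr hT0) hS1
  rw [neg_div] at hTS0 hTS1
  have hDe : (0:ℝ) ≤ D * Real.exp (-1) := by positivity
  have hlD : (0:ℝ) ≤ Real.log D := Real.log_nonneg (by exact_mod_cast hD)
  rw [abs_le]
  constructor
  · linarith
  · linarith


lemma hasDerivG (D : ℕ) (hD : 0 < D) (r : Fin D → ℝ) {lam : ℝ} (hlam : 0 < lam) :
    HasDerivAt (fun l => G D l r)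
      (Real.log (∑ d, Real.exp (r d / lam)) -
        (∑ d, Real.exp (r d / lam) * (r d / lam)) / (∑ d, Real.exp (r d / lam))) lam := by
  haveI : Nonempty (Fin D) := Fin.pos_iff_nonempty.mp hD
  have hSpos : 0 < ∑ d, Real.exp (r d / lam) :=
    Finset.sum_pos (fun d _ => Real.exp_pos _) univ_nonempty
  have hinner : ∀ d : Fin D, HasDerivAt (fun l : ℝ => r d / l)
      (r d * -((lam ^ 2)⁻¹)) lam := by
    intro d
    simpa [div_eq_mul_inv] using (hasDerivAt_inv hlam.ne').const_mul (r d)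
  have hexp : ∀ d : Fin D, HasDerivAt (fun l : ℝ => Real.exp (r d / l))
      (Real.exp (r d / lam) * (r d * -((lam ^ 2)⁻¹))) lam := fun d => (hinner d).exp
  have hsum : HasDerivAt (fun l : ℝ => ∑ d, Real.exp (r d / l))
      (∑ d, Real.exp (r d / lam) * (r d * -((lam ^ 2)⁻¹))) lam := by
    exact HasDerivAt.fun_sum (fun d _ => hexp d)
  have hlog : HasDerivAt (fun l : ℝ => Real.log (∑ d, Real.exp (r d / l)))
      ((∑ d, Real.exp (r d / lam) * (r d * -((lam ^ 2)⁻¹))) / (∑ d, Real.exp (r d / lam))) lam :=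
    hsum.log hSpos.ne'
  have hmul := (hasDerivAt_id lam).mul hlog
  have heq : (1 : ℝ) * Real.log (∑ d, Real.exp (r d / lam)) +
      lam * ((∑ d, Real.exp (r d / lam) * (r d * -((lam ^ 2)⁻¹))) / (∑ d, Real.exp (r d / lam)))
      = Real.log (∑ d, Real.exp (r d / lam)) -
        (∑ d, Real.exp (r d / lam) * (r d / lam)) / (∑ d, Real.exp (r d / lam)) := by
    have hnum : (∑ d, Real.exp (r d / lam) * (r d * -((lam ^ 2)⁻¹)))
        = -lam⁻¹ * ∑ d, Real.exp (r d / lam) * (r d / lam) := by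
      rw [Finset.mul_sum]
      refine Finset.sum_congr rfl (fun d _ => ?_)
      have hsq : ((lam:ℝ)^2)⁻¹ = lam⁻¹ * lam⁻¹ := by rw [sq, mul_inv]
      rw [div_eq_mul_inv, hsq]
      ring
    rw [hnum]
    rw [mul_div_assoc' lam, ← mul_assoc, mul_neg, mul_inv_cancel₀ hlam.ne']
    ring
  rw [← heq]
  exact hmul

theorem stmt_6 (D : ℕ) (hD : 0 < D) :
    (∀ lam : ℝ, 0 < lam → ∀ r : Fin D → ℝ,
      |deriv (fun l => G D l r) lam| ≤ Real.log D + D * Real.exp (-1)) ∧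
    (∀ r : Fin D → ℝ, ∀ lam₁ lam₂ : ℝ, 0 < lam₁ → 0 < lam₂ →
      |G D lam₁ r - G D lam₂ r| ≤ (Real.log D + D * Real.exp (-1)) * |lam₁ - lam₂|) := by
  constructor
  · intro lam hlam r
    rw [(hasDerivG D hD r hlam).deriv]
    exact keyA D hD (fun d => r d / lam)
  · intro r lam₁ lam₂ h₁ h₂
    set C := Real.log D + D * Real.exp (-1) with hC
    have hbound : ∀ l ∈ Set.Ioi (0 : ℝ),
        ‖Real.log (∑ d, Real.exp (r d / l)) -
          (∑ d, Real.exp (r d / l) * (r d / l)) / (∑ d, Real.exp (r d / l))‖ ≤ C := by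
      intro l hl
      exact keyA D hD (fun d => r d / l)
    have key := Convex.norm_image_sub_le_of_norm_hasDerivWithin_le
      (f := fun l => G D l r)
      (f' := fun l => Real.log (∑ d, Real.exp (r d / l)) -
          (∑ d, Real.exp (r d / l) * (r d / l)) / (∑ d, Real.exp (r d / l)))
      (fun l hl => (hasDerivG D hD r hl).hasDerivWithinAt) hbound
      (convex_Ioi 0) h₂ h₁
    simpa [Real.norm_eq_abs] using key
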